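/- The even subalgebra of the Clifford algebra G(2,1) = CliffordAlgebra Q, where Q(v)=v₁²+v₂²−v₃² on ℝ³, is isomorphic as an ℝ-algebra to the split-quaternions, i.e. to QuaternionAlgebra ℝ (−1) 1 (equivalently to the algebra of 2×2 real matrices). -/

import Mathlib

open CliffordAlgebra
open scoped Quaternion

/-- The quadratic form `Q(v) = v₁² + v₂² - v₃²` on `ℝ³` (signature (2,1)). -/
noncomputable def Q21 : QuadraticForm ℝ (Fin 3 → ℝ) :=
  QuadraticMap.weightedSumSquares ℝ ![(1 : ℝ), 1, -1]

section EvenIso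
variable {R M₁ M₂ : Type*} [CommRing R] [AddCommGroup M₁] [AddCommGroup M₂]
  [Module R M₁] [Module R M₂] {Q₁ : QuadraticForm R M₁} {Q₂ : QuadraticForm R M₂}

/-- Transport an `EvenHom` along an isometry. -/
noncomputable def evenHomOfIsometry (e : Q₁.IsometryEquiv Q₂) : EvenHom Q₁ (even Q₂) where
  bilin := (even.ι Q₂).bilin.compl₁₂ e.toLinearEquiv.toLinearMap e.toLinearEquiv.toLinearMap
  contract m := by
    simp only [LinearMap.compl₁₂_apply, LinearEquiv.coe_coe, (even.ι Q₂).contract]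
    rw [show Q₂ (e.toLinearEquiv m) = Q₁ m from e.map_app m]
  contract_mid m₁ m₂ m₃ := by
    simp only [LinearMap.compl₁₂_apply, LinearEquiv.coe_coe, (even.ι Q₂).contract_mid]
    rw [show Q₂ (e.toLinearEquiv m₂) = Q₁ m₂ from e.map_app m₂]

noncomputable def evenMapOfIsometry (e : Q₁.IsometryEquiv Q₂) : even Q₁ →ₐ[R] even Q₂ :=
  even.lift Q₁ (evenHomOfIsometry e)

lemma evenMapOfIsometry_ι (e : Q₁.IsometryEquiv Q₂) (m₁ m₂ : M₁) :
    evenMapOfIsometry e ((even.ι Q₁).bilin m₁ m₂) =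
      (even.ι Q₂).bilin (e.toLinearEquiv m₁) (e.toLinearEquiv m₂) :=
  even.lift_ι _ _ _ _

noncomputable def evenEquivOfIsometry (e : Q₁.IsometryEquiv Q₂) : even Q₁ ≃ₐ[R] even Q₂ :=
  AlgEquiv.ofAlgHom (evenMapOfIsometry e) (evenMapOfIsometry e.symm)
    (by
      ext m₁ m₂
      simp only [EvenHom.compr₂_bilin, LinearMap.compr₂_apply, AlgHom.toLinearMap_apply,
        AlgHom.coe_comp, Function.comp_apply, AlgHom.coe_id, id_eq, evenMapOfIsometry_ι]
      rw [show e.toLinearEquiv (e.symm.toLinearEquiv m₁) = m₁ from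
        e.toLinearEquiv.apply_symm_apply m₁,
        show e.toLinearEquiv (e.symm.toLinearEquiv m₂) = m₂ from
        e.toLinearEquiv.apply_symm_apply m₂])
    (by
      ext m₁ m₂
      simp only [EvenHom.compr₂_bilin, LinearMap.compr₂_apply, AlgHom.toLinearMap_apply,
        AlgHom.coe_comp, Function.comp_apply, AlgHom.coe_id, id_eq, evenMapOfIsometry_ι]
      rw [show e.symm.toLinearEquiv (e.toLinearEquiv m₁) = m₁ from
        e.toLinearEquiv.symm_apply_apply m₁,
        show e.symm.toLinearEquiv (e.toLinearEquiv m₂) = m₂ from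
        e.toLinearEquiv.symm_apply_apply m₂])

end EvenIso

/-- Explicit isomorphism `ℍ[ℝ,1,1] ≃ₐ[ℝ] ℍ[ℝ,-1,1]`, sending `i ↦ k`, `j ↦ j`, `k ↦ i`. -/
noncomputable def splitSwap : ℍ[ℝ, 1, 1] ≃ₐ[ℝ] ℍ[ℝ, -1, 1] where
  toFun q := ⟨q.re, q.imK, q.imJ, q.imI⟩
  invFun q := ⟨q.re, q.imK, q.imJ, q.imI⟩
  left_inv q := rfl
  right_inv q := rfl
  map_mul' x y := by
    ext <;>
      simp only [QuaternionAlgebra.re_mul, QuaternionAlgebra.imI_mul,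
        QuaternionAlgebra.imJ_mul, QuaternionAlgebra.imK_mul] <;> ring
  map_add' x y := rfl
  commutes' r := rfl

noncomputable def Q21' : QuadraticForm ℝ ((ℝ × ℝ) × ℝ) :=
  CliffordAlgebra.EquivEven.Q' (CliffordAlgebraQuaternion.Q (1 : ℝ) 1)

/-- The reindexing linear equivalence `ℝ³ ≃ (ℝ × ℝ) × ℝ`. -/
noncomputable def lin3 : (Fin 3 → ℝ) ≃ₗ[ℝ] (ℝ × ℝ) × ℝ where
  toFun v := ((v 0, v 1), v 2)
  invFun p := ![p.1.1, p.1.2, p.2]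
  map_add' _ _ := rfl
  map_smul' _ _ := rfl
  left_inv v := by funext i; fin_cases i <;> rfl
  right_inv p := rfl

noncomputable def isoQ : Q21.IsometryEquiv Q21' where
  toLinearEquiv := lin3
  map_app' v := by
    simp only [Q21, Q21', lin3, CliffordAlgebra.EquivEven.Q'_apply,
      CliffordAlgebraQuaternion.Q_apply, QuadraticMap.weightedSumSquares_apply,
      Fin.sum_univ_three, LinearEquiv.coe_mk, Matrix.cons_val_zero, Matrix.cons_val_one,
      Matrix.head_cons, Matrix.cons_val_two, Matrix.tail_cons, smul_eq_mul]
    ring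

/-- The even subalgebra of `G(2,1)` is isomorphic as an `ℝ`-algebra to the split-quaternions
`ℍ[ℝ, -1, 1] = QuaternionAlgebra ℝ (-1) 1`. -/
theorem even_G21_iso_split_quaternions :
    Nonempty (CliffordAlgebra.even Q21 ≃ₐ[ℝ] ℍ[ℝ, -1, 1]) := by
  exact ⟨((evenEquivOfIsometry isoQ).trans
      (equivEven (CliffordAlgebraQuaternion.Q (1 : ℝ) 1)).symm).trans
    ((CliffordAlgebraQuaternion.equiv).trans splitSwap)⟩
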